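/- Let R be an ω₁-tree with no uncountable antichains (a Suslin tree) with a minimum element, in which every node has uncountably many successors. For every function f : R \ {min(R)} → R that is regressive (f(x) < x for all x), there is an uncountable U ⊆ R \ {min(R)} and a single s ∈ R with f(x) = s for all x ∈ U. -/

import Mathlib

open Cardinal Ordinal Set

/-- Pressing-down lemma for Suslin trees. Let `R` be a Suslin tree (an
`om1`-tree with no uncountable chains or antichains, every node having uncountably many
nodes above it) with a minimum element `m`. For every regressive
`f : R \ {m} → R` (`f x < x`), there is an uncountable `U ⊆ R \ {m}` on which `f` is
constant. -/
theorem suslin_pressing_down (R : Type) [PartialOrder R]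
    (hcard : Cardinal.mk R = Cardinal.aleph 1) (hwf : WellFoundedLT R)
    (htree : ∀ t a b : R, a < t → b < t → a ≤ b ∨ b ≤ a)
    (hchain : ∀ C : Set R, (∀ a ∈ C, ∀ b ∈ C, a ≤ b ∨ b ≤ a) → C.Countable)
    (hanti : ∀ A : Set R, (∀ a ∈ A, ∀ b ∈ A, a ≠ b → ¬ (a ≤ b ∨ b ≤ a)) → A.Countable)
    (habove : ∀ s : R, ¬ {t : R | s ≤ t}.Countable)
    (m : R) (hm : ∀ x : R, m ≤ x)
    (f : R → R) (hreg : ∀ x : R, x ≠ m → f x < x) :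
    ∃ U : Set R, ¬ U.Countable ∧ (∀ x ∈ U, x ≠ m) ∧ ∃ s : R, ∀ x ∈ U, f x = s := by
  haveI := hwf
  set om1 : Ordinal := (Cardinal.aleph 1).ord with hom1
  have hom1lim : Order.IsSuccLimit om1 := Cardinal.isSuccLimit_ord (Cardinal.aleph0_le_aleph 1)
  set rk : R → Ordinal := IsWellFounded.rank (α := R) (· < ·) with hrk
  have rk_mono : ∀ {a b : R}, a < b → rk a < rk b :=
    fun h => IsWellFounded.rank_lt_of_rel h
  -- each level is an antichain, hence countable
  have level_ct : ∀ γ : Ordinal, {y : R | rk y = γ}.Countable := by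
    intro γ
    apply hanti
    intro a ha b hb hne hcomp
    rcases hcomp with h | h
    · exact absurd (ha.trans hb.symm) (rk_mono (lt_of_le_of_ne h hne)).ne
    · exact absurd (hb.trans ha.symm) (rk_mono (lt_of_le_of_ne h (Ne.symm hne))).ne
  -- initial segments of ordinals below om1 are countable
  have ctIio : ∀ {α : Ordinal}, α < om1 → (Set.Iio α).Countable := by
    intro α hα
    rw [Cardinal.countable_iff_lt_aleph_one, Ordinal.mk_Iio_ordinal]
    have h1 : α.card < Cardinal.aleph 1 := Cardinal.lt_ord.mp hα
    have := Cardinal.lift_lt.{0, 1}.mpr h1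
    rwa [Cardinal.lift_aleph, Ordinal.lift_one] at this
  have Rnotct : ¬ (Set.univ : Set R).Countable := by
    intro h
    have : Countable R := Set.countable_univ_iff.mp h
    have h2 : Cardinal.mk R ≤ Cardinal.aleph0 := Cardinal.mk_le_aleph0
    rw [hcard] at h2
    exact absurd h2 (not_le.mpr Cardinal.aleph0_lt_aleph_one)
  -- every ordinal < om1 is the rank of some element
  have cover : ∀ γ : Ordinal, γ < om1 → ∃ y : R, rk y = γ := by
    intro γ hγ
    by_contra h
    push_neg at h
    have hall : ∀ y : R, rk y < γ := by
      intro y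
      by_contra hy
      push_neg at hy
      obtain ⟨b, hb⟩ := IsWellFounded.mem_range_rank_of_le hy
      exact h b hb
    apply Rnotct
    have hsub : (Set.univ : Set R) ⊆ ⋃ β ∈ Set.Iio γ, {y : R | rk y = β} :=
      fun y _ => Set.mem_biUnion (hall y) rfl
    exact ((ctIio hγ).biUnion fun β _ => level_ct β).mono hsub
  -- pick an element of each rank
  classical
  let x : Ordinal → R := fun γ => if h : γ < om1 then (cover γ h).choose else m
  have hx : ∀ γ : Ordinal, γ < om1 → rk (x γ) = γ := by
    intro γ hγ
    simp only [x, dif_pos hγ]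
    exact (cover γ hγ).choose_spec
  have h0ω : (0 : Ordinal) < om1 := hom1lim.pos
  have h1ω : (1 : Ordinal) < om1 := by
    rw [← Ordinal.succ_zero]
    exact hom1lim.succ_lt h0ω
  -- rank of m is 0
  have rkm : rk m = 0 := by
    have h0 := hx 0 h0ω
    by_cases he : x 0 = m
    · rw [← he]; exact h0
    · exact absurd (rk_mono (lt_of_le_of_ne (hm (x 0)) (Ne.symm he))) (by rw [h0]; exact not_lt_of_ge zero_le)
  have xne : ∀ γ : Ordinal, γ ∈ Set.Ioo (0 : Ordinal) om1 → x γ ≠ m := by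
    intro γ hγ he
    have := hx γ hγ.2
    rw [he, rkm] at this
    exact hγ.1.ne this
  by_cases H : ∃ s : R, ¬ {y : R | y ≠ m ∧ f y = s}.Countable
  · obtain ⟨s, hs⟩ := H
    exact ⟨_, hs, fun y hy => hy.1, s, fun y hy => hy.2⟩
  push_neg at H
  exfalso
  set g : Ordinal → Ordinal := fun β => rk (f (x β)) with hg
  -- each fiber of g (over parameters in Ioo 0 om1) is countable
  have hB : ∀ γ : Ordinal, {β | β ∈ Set.Ioo (0 : Ordinal) om1 ∧ g β = γ}.Countable := by
    intro γ
    have maps : Set.MapsTo x {β | β ∈ Set.Ioo (0 : Ordinal) om1 ∧ g β = γ}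
        (⋃ s ∈ {y : R | rk y = γ}, {y : R | y ≠ m ∧ f y = s}) := by
      intro β hβ
      exact Set.mem_biUnion (hβ.2 : rk (f (x β)) = γ) ⟨xne β hβ.1, rfl⟩
    have inj : Set.InjOn x {β | β ∈ Set.Ioo (0 : Ordinal) om1 ∧ g β = γ} := by
      intro a ha b hb hab
      have := congrArg rk hab
      rwa [hx a ha.1.2, hx b hb.1.2] at this
    exact maps.countable_of_injOn inj ((level_ct γ).biUnion fun s _ => H s)
  have hD : ∀ α : Ordinal, α < om1 →
      {β | β ∈ Set.Ioo (0 : Ordinal) om1 ∧ g β < α}.Countable := by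
    intro α hα
    have hsub : {β | β ∈ Set.Ioo (0 : Ordinal) om1 ∧ g β < α} ⊆
        ⋃ γ ∈ Set.Iio α, {β | β ∈ Set.Ioo (0 : Ordinal) om1 ∧ g β = γ} :=
      fun β hβ => Set.mem_biUnion hβ.2 ⟨hβ.1, rfl⟩
    exact ((ctIio hα).biUnion fun γ _ => hB γ).mono hsub
  -- a bounding function
  have bound : ∀ c : Ordinal, c < om1 → ∃ b : Ordinal, b < om1 ∧ c < b ∧
      ∀ β ∈ Set.Ioo (0 : Ordinal) om1, g β < c → β < b := by
    intro c hc
    rcases ({β | β ∈ Set.Ioo (0 : Ordinal) om1 ∧ g β < c} : Set Ordinal).eq_empty_or_nonempty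
      with he | hne
    · refine ⟨Order.succ c, hom1lim.succ_lt hc, Order.lt_succ c, fun β hβ hgβ => ?_⟩
      have : β ∈ (∅ : Set Ordinal) := he ▸ (⟨hβ, hgβ⟩ :
        β ∈ {β | β ∈ Set.Ioo (0 : Ordinal) om1 ∧ g β < c})
      exact absurd this (Set.notMem_empty β)
    · obtain ⟨e, he⟩ := (hD c hc).exists_eq_range hne
      have heω : ∀ n, Order.succ (e n) < om1 := by
        intro n
        have : e n ∈ {β | β ∈ Set.Ioo (0 : Ordinal) om1 ∧ g β < c} := by
          rw [he]; exact Set.mem_range_self n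
        exact hom1lim.succ_lt this.1.2
      have hsup : (⨆ n, Order.succ (e n)) < om1 := by
        have h := Ordinal.iSup_lt_omega_one (f := fun n => Order.succ (e n)) (by simpa [hom1, Cardinal.ord_aleph] using heω)
        simpa [hom1, Cardinal.ord_aleph] using h
      refine ⟨max (Order.succ c) (⨆ n, Order.succ (e n)),
        max_lt (hom1lim.succ_lt hc) hsup, lt_of_lt_of_le (Order.lt_succ c) (le_max_left _ _),
        fun β hβ hgβ => ?_⟩
      have hmem : β ∈ Set.range e := he ▸ (⟨hβ, hgβ⟩ :
        β ∈ {β | β ∈ Set.Ioo (0 : Ordinal) om1 ∧ g β < c})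
      obtain ⟨n, hn⟩ := hmem
      calc β = e n := hn.symm
        _ < Order.succ (e n) := Order.lt_succ _
        _ ≤ ⨆ n, Order.succ (e n) := Ordinal.le_iSup _ n
        _ ≤ _ := le_max_right _ _
  -- iterate the bounding function
  let P : {b : Ordinal // b < om1} → {b : Ordinal // b < om1} := fun p =>
    ⟨(bound p.1 p.2).choose, (bound p.1 p.2).choose_spec.1⟩
  let A : ℕ → {b : Ordinal // b < om1} := fun n => P^[n] ⟨1, h1ω⟩
  let a : ℕ → Ordinal := fun n => (A n).1
  have hA_succ : ∀ n, A (n + 1) = P (A n) := fun n => Function.iterate_succ_apply' P n _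
  have ha_lt : ∀ n, a n < om1 := fun n => (A n).2
  have ha_mono : ∀ n, a n < a (n + 1) := by
    intro n
    have : a (n + 1) = (P (A n)).1 := congrArg Subtype.val (hA_succ n)
    rw [this]
    exact (bound (a n) (ha_lt n)).choose_spec.2.1
  have ha_D : ∀ n, ∀ β ∈ Set.Ioo (0 : Ordinal) om1, g β < a n → β < a (n + 1) := by
    intro n β hβ hgβ
    have : a (n + 1) = (P (A n)).1 := congrArg Subtype.val (hA_succ n)
    rw [this]
    exact (bound (a n) (ha_lt n)).choose_spec.2.2 β hβ hgβ
  set lam : Ordinal := ⨆ n, a n with hlam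
  have hlamω : lam < om1 := by
    have h := Ordinal.iSup_lt_omega_one (f := a) (by simpa [hom1, Cardinal.ord_aleph] using ha_lt)
    simpa [hom1, Cardinal.ord_aleph] using h
  have hle : ∀ n, a n ≤ lam := fun n => Ordinal.le_iSup _ n
  have hlam0 : 0 < lam := by
    have ha0 : a 0 = 1 := rfl
    calc (0 : Ordinal) < 1 := zero_lt_one
      _ = a 0 := ha0.symm
      _ ≤ lam := hle 0
  have hlamIoo : lam ∈ Set.Ioo (0 : Ordinal) om1 := ⟨hlam0, hlamω⟩
  have hglam : g lam < lam := by
    have := rk_mono (hreg (x lam) (xne lam hlamIoo))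
    rwa [hx lam hlamω] at this
  rw [hlam] at hglam
  obtain ⟨n, hn⟩ := Ordinal.lt_iSup_iff.mp hglam
  have : lam < a (n + 1) := ha_D n lam hlamIoo hn
  exact absurd (hle (n + 1)) (not_le.mpr this)
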